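/- Let P := {(x,y,z) ∈ ℝ³ : |x| + |y| + |z| ≤ 1} and, for each even integer p ≥ 2, let P^p := {(x,y,z) ∈ ℝ³ : |x - t_p| + |y| + |z| ≤ l_p/2}. Then the Hausdorff distance h(P, P^{2n}) tends to 0 as n → ∞. -/

import Mathlib

open Filter Real

private lemma sqrt_le_abs3 (a b c : ℝ) : Real.sqrt (a^2 + b^2 + c^2) ≤ |a| + |b| + |c| := by
  have h : a^2+b^2+c^2 ≤ (|a|+|b|+|c|)^2 := by
    nlinarith [sq_abs a, sq_abs b, sq_abs c, mul_nonneg (abs_nonneg a) (abs_nonneg b),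
      mul_nonneg (abs_nonneg a) (abs_nonneg c), mul_nonneg (abs_nonneg b) (abs_nonneg c)]
  calc Real.sqrt (a^2+b^2+c^2) ≤ Real.sqrt ((|a|+|b|+|c|)^2) := Real.sqrt_le_sqrt h
    _ = |a|+|b|+|c| := Real.sqrt_sq (by positivity)

private lemma dist_le_key (t R : ℝ) (x y : EuclideanSpace ℝ (Fin 3))
    (h0 : y 0 = t + R * x 0) (h1 : y 1 = R * x 1) (h2 : y 2 = R * x 2)
    (hx : |x 0| + |x 1| + |x 2| ≤ 1) : dist x y ≤ |t| + |R - 1| := by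
  rw [EuclideanSpace.dist_eq, Fin.sum_univ_three]
  simp only [Real.dist_eq]
  have key : Real.sqrt (|x 0 - y 0|^2 + |x 1 - y 1|^2 + |x 2 - y 2|^2)
      ≤ |x 0 - y 0| + |x 1 - y 1| + |x 2 - y 2| := by
    have := sqrt_le_abs3 (x 0 - y 0) (x 1 - y 1) (x 2 - y 2)
    simpa [sq_abs] using this
  have e0 : |x 0 - y 0| ≤ |t| + |R - 1| * |x 0| := by
    have : x 0 - y 0 = -(t + (R-1) * x 0) := by rw [h0]; ring
    rw [this, abs_neg]
    calc |t + (R-1) * x 0| ≤ |t| + |(R-1) * x 0| := abs_add_le _ _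
      _ = |t| + |R-1| * |x 0| := by rw [abs_mul]
  have e1 : |x 1 - y 1| = |R - 1| * |x 1| := by
    have : x 1 - y 1 = -((R-1) * x 1) := by rw [h1]; ring
    rw [this, abs_neg, abs_mul]
  have e2 : |x 2 - y 2| = |R - 1| * |x 2| := by
    have : x 2 - y 2 = -((R-1) * x 2) := by rw [h2]; ring
    rw [this, abs_neg, abs_mul]
  have habs : Real.sqrt (|x 0 - y 0|^2 + |x 1 - y 1|^2 + |x 2 - y 2|^2)
      ≤ |t| + |R - 1| := by
    calc Real.sqrt (|x 0 - y 0|^2 + |x 1 - y 1|^2 + |x 2 - y 2|^2)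
        ≤ |x 0 - y 0| + |x 1 - y 1| + |x 2 - y 2| := key
      _ ≤ |t| + |R-1| * |x 0| + |R-1| * |x 1| + |R-1| * |x 2| := by
          rw [e1, e2]; linarith
      _ ≤ |t| + |R - 1| := by nlinarith [abs_nonneg (R-1)]
  exact habs

private lemma haus_le (t R : ℝ) (hR : 0 < R) :
    Metric.hausdorffDist
      {v : EuclideanSpace ℝ (Fin 3) | |v 0| + |v 1| + |v 2| ≤ 1}
      {v : EuclideanSpace ℝ (Fin 3) | |v 0 - t| + |v 1| + |v 2| ≤ R} ≤ |t| + |R - 1| := by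
  apply Metric.hausdorffDist_le_of_mem_dist (by positivity)
  · intro x hx
    simp only [Set.mem_setOf_eq] at hx
    refine ⟨(WithLp.toLp 2 (fun i => if i = 0 then t + R * x 0 else R * x i) : EuclideanSpace ℝ (Fin 3)), ?_, ?_⟩
    · simp only [Set.mem_setOf_eq, PiLp.toLp_apply]
      rw [if_pos trivial, if_neg (by decide), if_neg (by decide)]
      have : |t + R * x 0 - t| = R * |x 0| := by
        rw [show t + R * x 0 - t = R * x 0 by ring, abs_mul, abs_of_pos hR]
      rw [this, abs_mul, abs_mul, abs_of_pos hR]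
      nlinarith [abs_nonneg (x 0), abs_nonneg (x 1), abs_nonneg (x 2)]
    · exact dist_le_key t R x _ rfl rfl rfl hx
  · intro y hy
    simp only [Set.mem_setOf_eq] at hy
    refine ⟨(WithLp.toLp 2 (fun i => if i = 0 then (y 0 - t) / R else y i / R) : EuclideanSpace ℝ (Fin 3)), ?_, ?_⟩
    · simp only [Set.mem_setOf_eq, PiLp.toLp_apply]
      rw [if_pos trivial, if_neg (by decide), if_neg (by decide), abs_div, abs_div, abs_div, abs_of_pos hR, ← add_div,
        ← add_div, div_le_one hR]
      exact hy
    · rw [dist_comm]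
      set x : EuclideanSpace ℝ (Fin 3) :=
        (WithLp.toLp 2 (fun i => if i = 0 then (y 0 - t) / R else y i / R) : EuclideanSpace ℝ (Fin 3)) with hxdef
      have hR' : R ≠ 0 := ne_of_gt hR
      have h0 : y 0 = t + R * x 0 := by
        show y 0 = t + R * ((y 0 - t) / R); field_simp; ring
      have h1 : y 1 = R * x 1 := by
        show y 1 = R * (y 1 / R); field_simp
      have h2 : y 2 = R * x 2 := by
        show y 2 = R * (y 2 / R); field_simp
      have hxmem : |x 0| + |x 1| + |x 2| ≤ 1 := by
        show |(y 0 - t)/R| + |y 1 / R| + |y 2 / R| ≤ 1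
        rw [abs_div, abs_div, abs_div, abs_of_pos hR, ← add_div,
          ← add_div, div_le_one hR]
        exact hy
      exact dist_le_key t R x y h0 h1 h2 hxmem

private lemma tendsto_rpow_aux (c : ℝ) (hc : 0 < c) :
    Tendsto (fun q : ℝ => (c * q) ^ ((1:ℝ)/(q-1))) atTop (nhds 1) := by
  have hlog : Tendsto (fun q : ℝ => Real.log (c * q) * ((1:ℝ)/(q-1))) atTop (nhds 0) := by
    have h1 : Tendsto (fun q : ℝ => Real.log c * ((1:ℝ)/(q-1))) atTop (nhds 0) := by
      have : Tendsto (fun q : ℝ => (q-1)⁻¹) atTop (nhds 0) :=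
        tendsto_inv_atTop_zero.comp (tendsto_atTop_add_const_right _ (-1) tendsto_id)
      simpa using this.const_mul (Real.log c)
    have h2 : Tendsto (fun q : ℝ => Real.log q / (q - 1)) atTop (nhds 0) := by
      have := Real.tendsto_pow_log_div_mul_add_atTop 1 (-1) 1 one_ne_zero
      simp only [pow_one, one_mul] at this
      convert this using 2 with q <;> ring_nf
    have := h1.add h2
    rw [add_zero] at this
    apply this.congr'
    filter_upwards [eventually_gt_atTop (1:ℝ)] with q hq
    have hq0 : 0 < q := by linarith
    rw [Real.log_mul (ne_of_gt hc) (ne_of_gt hq0)]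
    field_simp
  have := (Real.continuous_exp.tendsto 0).comp hlog
  rw [Real.exp_zero] at this
  apply this.congr'
  filter_upwards [eventually_gt_atTop (0:ℝ)] with q hq
  simp only [Function.comp_apply]
  rw [Real.rpow_def_of_pos (by positivity)]

theorem stmt_16 :
    Filter.Tendsto
      (fun n : ℕ =>
        Metric.hausdorffDist
          {v : EuclideanSpace ℝ (Fin 3) | |v 0| + |v 1| + |v 2| ≤ 1}
          {v : EuclideanSpace ℝ (Fin 3) |
            |v 0 - (-((2 * n : ℕ) : ℝ) *
                  ((2 * ((2 * n : ℕ) : ℝ)) ^ ((1 : ℝ) / (((2 * n : ℕ) : ℝ) - 1)) - 1) - 1) /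
                (2 * ((2 * n : ℕ) : ℝ) ^ (((2 * n : ℕ) : ℝ) / (((2 * n : ℕ) : ℝ) - 1)))| +
              |v 1| + |v 2| ≤
              (((2 * n : ℕ) : ℝ) *
                    ((2 * ((2 * n : ℕ) : ℝ)) ^ ((1 : ℝ) / (((2 * n : ℕ) : ℝ) - 1)) + 1) - 1) /
                  ((2 * n : ℕ) : ℝ) ^ (((2 * n : ℕ) : ℝ) / (((2 * n : ℕ) : ℝ) - 1)) / 2})
      Filter.atTop (nhds 0) := by
  set Tf : ℝ → ℝ := fun q => (-q * ((2*q) ^ ((1:ℝ)/(q-1)) - 1) - 1) / (2 * q ^ (q/(q-1))) with hTf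
  set Rf : ℝ → ℝ := fun q => (q * ((2*q) ^ ((1:ℝ)/(q-1)) + 1) - 1) / q ^ (q/(q-1)) / 2 with hRf
  have hA : Tendsto (fun q : ℝ => (2*q) ^ ((1:ℝ)/(q-1))) atTop (nhds 1) :=
    tendsto_rpow_aux 2 two_pos
  have hcc : Tendsto (fun q : ℝ => q ^ ((1:ℝ)/(q-1))) atTop (nhds 1) := by
    have := tendsto_rpow_aux 1 one_pos
    simpa using this
  -- rpow splitting
  have hsplit : ∀ q : ℝ, 2 ≤ q → q ^ (q/(q-1)) = q * q ^ ((1:ℝ)/(q-1)) := by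
    intro q hq
    have h1 : q - 1 ≠ 0 := by linarith
    have : q/(q-1) = 1 + 1/(q-1) := by field_simp; ring
    rw [this, Real.rpow_add (by linarith), Real.rpow_one]
  have hden : Tendsto (fun q : ℝ => 2 * q ^ ((1:ℝ)/(q-1))) atTop (nhds 2) := by
    have := hcc.const_mul (2:ℝ)
    simpa using this
  have hinv : Tendsto (fun q : ℝ => 1/q) atTop (nhds 0) := by
    simpa using tendsto_inv_atTop_zero
  have hT : Tendsto Tf atTop (nhds 0) := by
    have h2 : Tendsto (fun q : ℝ => -(((2*q) ^ ((1:ℝ)/(q-1)) - 1 + 1/q) /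
        (2 * q ^ ((1:ℝ)/(q-1))))) atTop (nhds 0) := by
      have hnum : Tendsto (fun q : ℝ => (2*q) ^ ((1:ℝ)/(q-1)) - 1 + 1/q) atTop (nhds 0) := by
        have := (hA.sub_const 1).add hinv
        simpa using this
      have := (hnum.div hden (by norm_num)).neg
      simpa using this
    apply h2.congr'
    filter_upwards [eventually_ge_atTop (2:ℝ)] with q hq
    have hq0 : (0:ℝ) < q := by linarith
    have hc0 : (0:ℝ) < q ^ ((1:ℝ)/(q-1)) := Real.rpow_pos_of_pos hq0 _
    rw [hTf]
    simp only
    rw [hsplit q hq]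
    field_simp
    ring
  have hR : Tendsto Rf atTop (nhds 1) := by
    have h2 : Tendsto (fun q : ℝ => ((2*q) ^ ((1:ℝ)/(q-1)) + 1 - 1/q) /
        (2 * q ^ ((1:ℝ)/(q-1)))) atTop (nhds 1) := by
      have hnum : Tendsto (fun q : ℝ => (2*q) ^ ((1:ℝ)/(q-1)) + 1 - 1/q) atTop (nhds 2) := by
        have h := (hA.add_const 1).sub hinv
        convert h using 2
        norm_num
      have h3 := hnum.div hden (by norm_num : (2:ℝ) ≠ 0)
      convert h3 using 2
      norm_num
      norm_num
    apply h2.congr'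
    filter_upwards [eventually_ge_atTop (2:ℝ)] with q hq
    have hq0 : (0:ℝ) < q := by linarith
    have hc0 : (0:ℝ) < q ^ ((1:ℝ)/(q-1)) := Real.rpow_pos_of_pos hq0 _
    rw [hRf]
    simp only
    rw [hsplit q hq]
    field_simp
  -- composition with n ↦ 2n
  have hq : Tendsto (fun n : ℕ => ((2 * n : ℕ) : ℝ)) atTop atTop := by
    have h1 : Tendsto (fun n : ℕ => (n : ℝ)) atTop atTop := tendsto_natCast_atTop_atTop
    have h2 := h1.const_mul_atTop (show (0:ℝ) < 2 by norm_num)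
    apply h2.congr
    intro n; push_cast; ring
  have hTn : Tendsto (fun n : ℕ => Tf ((2 * n : ℕ) : ℝ)) atTop (nhds 0) := hT.comp hq
  have hRn : Tendsto (fun n : ℕ => Rf ((2 * n : ℕ) : ℝ)) atTop (nhds 1) := hR.comp hq
  have hD : Tendsto (fun n : ℕ => |Tf ((2 * n : ℕ) : ℝ)| + |Rf ((2 * n : ℕ) : ℝ) - 1|)
      atTop (nhds 0) := by
    have := hTn.abs.add (hRn.sub_const 1).abs
    simpa using this
  have hRpos : ∀ᶠ n : ℕ in atTop, 0 < Rf ((2 * n : ℕ) : ℝ) :=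
    hRn.eventually (eventually_gt_nhds one_pos)
  apply squeeze_zero' (Eventually.of_forall fun n => Metric.hausdorffDist_nonneg) _ hD
  filter_upwards [hRpos] with n hn
  exact haus_le (Tf ((2 * n : ℕ) : ℝ)) (Rf ((2 * n : ℕ) : ℝ)) hn
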